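/- The matching produced by the doctor-proposing deferred acceptance algorithm is doctor-optimal among stable matchings: for every stable matching μ' and every doctor d, the DA outcome assigns d a hospital weakly preferred (by d) to μ'_d. -/

import Mathlib

open Finset

variable {D H : Type*} [Fintype D] [DecidableEq D] [Fintype H] [DecidableEq H]

/-- The hospital doctor `d` proposes to, given the set `A` of (doctor, hospital)
pairs `(d, h)` such that `h` has already rejected `d`.  Doctor preferences are
given by `pref d`, the list of `d`'s acceptable hospitals in order of strict
preference. -/
def propose (pref : D → List H) (A : Finset (D × H)) (d : D) : Option H :=
  (pref d).find? (fun h => decide ((d, h) ∉ A))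

/-- The set of doctors currently applying to hospital `h`. -/
def proposers (pref : D → List H) (A : Finset (D × H)) (h : H) : Finset D :=
  univ.filter (fun d => propose pref A d = some h)

/-- The (up to) `n` best doctors of `S` according to hospital `h`'s strict
priority order (lower `prio h` value means more preferred). -/
def topN (prio : H → D → ℕ) (h : H) (n : ℕ) (S : Finset D) : Finset D :=
  S.filter (fun d => (S.filter (fun d' => prio h d' < prio h d)).card < n)

/-- The doctors tentatively kept by hospital `h`: the best acceptable applicants,
up to the capacity `q h`. -/
def kept (pref : D → List H) (prio : H → D → ℕ) (acc : H → Finset D) (q : H → ℕ)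
    (A : Finset (D × H)) (h : H) : Finset D :=
  topN prio h (q h) (proposers pref A h ∩ acc h)

/-- One round of the doctor-proposing deferred acceptance algorithm, recorded via
the set of rejections so far: every applicant not tentatively kept is rejected. -/
def daStep (pref : D → List H) (prio : H → D → ℕ) (acc : H → Finset D) (q : H → ℕ)
    (A : Finset (D × H)) : Finset (D × H) :=
  A ∪ univ.filter (fun p : D × H =>
    propose pref A p.1 = some p.2 ∧ p.1 ∉ kept pref prio acc q A p.2)

/-- The outcome of the doctor-proposing deferred acceptance algorithm. -/
def daMatch (pref : D → List H) (prio : H → D → ℕ) (acc : H → Finset D) (q : H → ℕ)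
    (d : D) : Option H :=
  propose pref ((daStep pref prio acc q)^[Fintype.card D * Fintype.card H + 1] ∅) d

/-- The set of doctors matched to hospital `h` under matching `μ`. -/
def matchedSet (μ : D → Option H) (h : H) : Finset D :=
  univ.filter (fun d => μ d = some h)

/-- The rank of an outcome in doctor `d`'s preference list (smaller is better;
being unmatched ranks just below the least preferred acceptable hospital). -/
def rankOf (pref : D → List H) (d : D) : Option H → ℕ
  | none => (pref d).length
  | some h => (pref d).idxOf h

/-- Doctor `d` strictly prefers hospital `h` to outcome `o`. -/
def DPrefers (pref : D → List H) (d : D) (h : H) (o : Option H) : Prop :=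
  h ∈ pref d ∧ rankOf pref d (some h) < rankOf pref d o

/-- Individual rationality: nobody is matched with an unacceptable partner. -/
def IndivRat (pref : D → List H) (acc : H → Finset D) (μ : D → Option H) : Prop :=
  ∀ d h, μ d = some h → h ∈ pref d ∧ d ∈ acc h

/-- `(d, h)` is a blocking pair of `μ`. -/
def Blocks (pref : D → List H) (prio : H → D → ℕ) (acc : H → Finset D) (q : H → ℕ)
    (μ : D → Option H) (d : D) (h : H) : Prop :=
  DPrefers pref d h (μ d) ∧
    (((matchedSet μ h).card < q h ∧ d ∈ acc h) ∨
      ∃ d' ∈ matchedSet μ h, prio h d < prio h d')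

/-- Stability: individual rationality, capacities respected, and no blocking pair. -/
def IsStable (pref : D → List H) (prio : H → D → ℕ) (acc : H → Finset D) (q : H → ℕ)
    (μ : D → Option H) : Prop :=
  IndivRat pref acc μ ∧ (∀ h, (matchedSet μ h).card ≤ q h) ∧
    ∀ d h, ¬ Blocks pref prio acc q μ d h


/-- If `find?` returns `b` and `a` satisfies the predicate, then `b` occurs no
later than `a` in the (nodup) list. -/
lemma find?_indexOf_le {α : Type*} [DecidableEq α] {p : α → Bool} {b a : α} :
    ∀ {l : List α}, l.Nodup → l.find? p = some b → a ∈ l → p a = true →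
      l.idxOf b ≤ l.idxOf a := by
  intro l
  induction l with
  | nil => simp
  | cons c t ih =>
    intro hnd hf ha hp
    by_cases hc : p c = true
    · rw [List.find?_cons_of_pos hc] at hf
      cases hf
      simp [List.idxOf_cons_self]
    · rw [List.find?_cons_of_neg (by simpa using hc)] at hf
      have hbt : b ∈ t := List.mem_of_find?_eq_some hf
      have hac : a ≠ c := fun h => hc (h ▸ hp)
      have hat : a ∈ t := by
        rcases List.mem_cons.1 ha with rfl | h
        · exact absurd hp hc
        · exact h
      have hbc : b ≠ c := by
        rintro rfl
        exact (List.nodup_cons.1 hnd).1 hbt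
      rw [List.idxOf_cons_ne _ hbc.symm, List.idxOf_cons_ne _ hac.symm]
      exact Nat.succ_le_succ (ih (List.nodup_cons.1 hnd).2 hf hat hp)

lemma propose_spec {pref : D → List H} {A : Finset (D × H)} {d : D} {h : H}
    (hp : propose pref A d = some h) : h ∈ pref d ∧ (d, h) ∉ A :=
  ⟨List.mem_of_find?_eq_some hp, by simpa using List.find?_some hp⟩

/-- If the invariant holds (no stable partner has rejected anyone) and `d`
currently proposes to `h`, then `d` weakly prefers `h` to `μ' d`. -/
lemma propose_rank_le {pref : D → List H} {acc : H → Finset D} {μ' : D → Option H}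
    {A : Finset (D × H)} {d : D} {h : H}
    (hnd : ∀ d, (pref d).Nodup) (hir : IndivRat pref acc μ')
    (hInv : ∀ d h, (d, h) ∈ A → μ' d ≠ some h)
    (hp : propose pref A d = some h) :
    rankOf pref d (some h) ≤ rankOf pref d (μ' d) := by
  cases hμd : μ' d with
  | none =>
    exact le_of_lt (List.idxOf_lt_length_iff.2 (propose_spec hp).1)
  | some h0 =>
    have hmem : h0 ∈ pref d := (hir d h0 hμd).1
    have hnR : (d, h0) ∉ A := fun hc => hInv d h0 hc hμd
    exact find?_indexOf_le (hnd d) hp hmem (by simpa using hnR)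

/-- Strict version: if moreover `μ' d ≠ some h`, the preference is strict. -/
lemma propose_rank_lt {pref : D → List H} {acc : H → Finset D} {μ' : D → Option H}
    {A : Finset (D × H)} {d : D} {h : H}
    (hnd : ∀ d, (pref d).Nodup) (hir : IndivRat pref acc μ')
    (hInv : ∀ d h, (d, h) ∈ A → μ' d ≠ some h)
    (hp : propose pref A d = some h) (hne : μ' d ≠ some h) :
    DPrefers pref d h (μ' d) := by
  refine ⟨(propose_spec hp).1, ?_⟩
  cases hμd : μ' d with
  | none => exact List.idxOf_lt_length_iff.2 (propose_spec hp).1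
  | some h0 =>
    have hle : rankOf pref d (some h) ≤ rankOf pref d (some h0) := by
      rw [← hμd]; exact propose_rank_le hnd hir hInv hp
    refine lt_of_le_of_ne hle (fun heq => ?_)
    have hmem : h0 ∈ pref d := (hir d h0 hμd).1
    have : h = h0 := (List.idxOf_inj (propose_spec hp).1).1 heq
    exact hne (by rw [hμd, this])

/-- The invariant is preserved by one round of deferred acceptance. -/
lemma inv_daStep {pref : D → List H} {prio : H → D → ℕ} {acc : H → Finset D}
    {q : H → ℕ} {μ' : D → Option H} {A : Finset (D × H)}
    (hnd : ∀ d, (pref d).Nodup)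
    (hst : IsStable pref prio acc q μ')
    (hInv : ∀ d h, (d, h) ∈ A → μ' d ≠ some h) :
    ∀ d h, (d, h) ∈ daStep pref prio acc q A → μ' d ≠ some h := by
  obtain ⟨hir, hcap, hnb⟩ := hst
  intro d h hmem hμd
  rw [daStep, Finset.mem_union] at hmem
  rcases hmem with hmem | hmem
  · exact hInv d h hmem hμd
  · rw [Finset.mem_filter] at hmem
    obtain ⟨-, hp, hnk⟩ := hmem
    have hdacc : d ∈ acc h := (hir d h hμd).2
    have hdP : d ∈ proposers pref A h := by
      rw [proposers, Finset.mem_filter]; exact ⟨Finset.mem_univ _, hp⟩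
    have hdS : d ∈ proposers pref A h ∩ acc h := Finset.mem_inter.2 ⟨hdP, hdacc⟩
    set S := proposers pref A h ∩ acc h with hS
    set B := S.filter (fun d' => prio h d' < prio h d) with hB
    have hqB : q h ≤ B.card := by
      by_contra hlt
      exact hnk (Finset.mem_filter.2 ⟨hdS, Nat.lt_of_not_le hlt⟩)
    have hBmatch : ∀ d' ∈ B, μ' d' = some h := by
      intro d' hd'
      rw [hB, Finset.mem_filter] at hd'
      obtain ⟨hd'S, hlt⟩ := hd'
      rw [hS, Finset.mem_inter, proposers, Finset.mem_filter] at hd'S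
      obtain ⟨⟨-, hp'⟩, hacc'⟩ := hd'S
      by_contra hne
      apply hnb d' h
      refine ⟨propose_rank_lt hnd hir hInv hp' hne, Or.inr ⟨d, ?_, hlt⟩⟩
      rw [matchedSet, Finset.mem_filter]
      exact ⟨Finset.mem_univ _, hμd⟩
    have hsub : insert d B ⊆ matchedSet μ' h := by
      intro x hx
      rcases Finset.mem_insert.1 hx with rfl | hx
      · rw [matchedSet, Finset.mem_filter]; exact ⟨Finset.mem_univ _, hμd⟩
      · rw [matchedSet, Finset.mem_filter]
        exact ⟨Finset.mem_univ _, hBmatch x hx⟩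
    have hdB : d ∉ B := by
      rw [hB, Finset.mem_filter]
      rintro ⟨-, hlt⟩; exact lt_irrefl _ hlt
    have : B.card + 1 ≤ q h := by
      calc B.card + 1 = (insert d B).card := (Finset.card_insert_of_notMem hdB).symm
        _ ≤ (matchedSet μ' h).card := Finset.card_le_card hsub
        _ ≤ q h := hcap h
    omega

/-- the DA outcome is doctor-optimal among stable matchings: for every
stable matching `μ'` and every doctor `d`, the DA outcome assigns `d` a hospital
weakly preferred by `d` to `μ' d` (smaller rank = more preferred). -/
theorem da_doctor_optimal (pref : D → List H) (prio : H → D → ℕ) (acc : H → Finset D)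
    (q : H → ℕ) (hinj : ∀ h, Function.Injective (prio h))
    (hnd : ∀ d, (pref d).Nodup)
    (hcons : ∀ h d d', prio h d < prio h d' → d' ∈ acc h → d ∈ acc h) :
    ∀ μ' : D → Option H, IsStable pref prio acc q μ' →
      ∀ d, rankOf pref d (daMatch pref prio acc q d) ≤ rankOf pref d (μ' d) := by
  intro μ' hst d
  set N := Fintype.card D * Fintype.card H + 1 with hN
  have hInv : ∀ n, ∀ d h,
      (d, h) ∈ (daStep pref prio acc q)^[n] (∅ : Finset (D × H)) → μ' d ≠ some h := by
    intro n
    induction n with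
    | zero => simp
    | succ n ih =>
      rw [Function.iterate_succ_apply']
      exact inv_daStep hnd hst ih
  have hInvN := hInv N
  rw [daMatch, ← hN]
  cases hp : propose pref ((daStep pref prio acc q)^[N] ∅) d with
  | some h => exact propose_rank_le hnd hst.1 hInvN hp
  | none =>
    cases hμd : μ' d with
    | none => exact le_refl _
    | some h0 =>
      exfalso
      have hmem : h0 ∈ pref d := (hst.1 d h0 hμd).1
      have hnR : (d, h0) ∉ (daStep pref prio acc q)^[N] (∅ : Finset (D × H)) :=
        fun hc => hInvN d h0 hc hμd
      rw [propose, List.find?_eq_none] at hp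
      exact hp h0 hmem (by simpa using hnR)
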